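/- Let (X,d) be a proper geodesic metric space and φ : X → ℝ a Kantorovich potential. Let γ¹, γ² be φ-Kantorovich geodesics and 0 < t₁ < t₂ < 1 with γ¹_{t₁} = γ²_{t₂} = x. Then for every s ∈ (0,1): φ_s(γ²_s) − φ_s(γ¹_s) ≥ 2·min(s/t₂, (1−s)/(1−t₁))·(φ_{t₂}(x) − φ_{t₁}(x)) ≥ 0. Moreover, φ_s(γ²_s) − φ_s(γ¹_s) > 0 if and only if φ(x) + φ^c(x) ≠ 0. -/

import Mathlib

/-- `ψ` is pointwise the `c`-transform of `φ` for the cost `c = d²/2`: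
at every point `x`, `ψ x` is a genuine (finite) infimum of `d(x,y)²/2 - φ(y)` over `y`. -/
def IsCTransform {X : Type*} [MetricSpace X] (φ ψ : X → ℝ) : Prop :=
  ∀ x : X, IsGLB {v : ℝ | ∃ y : X, v = dist x y ^ 2 / 2 - φ y} (ψ x)

/-- `φ` is a Kantorovich potential with (real-valued) conjugate potential `φc`. -/
def IsKantorovichPair {X : Type*} [MetricSpace X] (φ φc : X → ℝ) : Prop :=
  IsCTransform φ φc ∧ IsCTransform φc φ

/-- A constant-speed geodesic parametrized on `[0,1]`. -/
def IsGeodesic {X : Type*} [MetricSpace X] (γ : ℝ → X) : Prop :=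
  ∀ s ∈ Set.Icc (0:ℝ) 1, ∀ t ∈ Set.Icc (0:ℝ) 1,
    dist (γ s) (γ t) = |s - t| * dist (γ 0) (γ 1)

/-- A `φ`-Kantorovich geodesic: a geodesic with `φ(γ₀) + φ^c(γ₁) = ℓ(γ)²/2`,
where `ℓ(γ) = d(γ₀,γ₁)`. -/
def IsKantorovichGeodesic {X : Type*} [MetricSpace X] (φ φc : X → ℝ) (γ : ℝ → X) : Prop :=
  IsGeodesic γ ∧ φ (γ 0) + φc (γ 1) = dist (γ 0) (γ 1) ^ 2 / 2

/-- A metric space is geodesic if every pair of points is joined by a geodesic. -/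
def IsGeodesicSpace (X : Type*) [MetricSpace X] : Prop :=
  ∀ x y : X, ∃ γ : ℝ → X, IsGeodesic γ ∧ γ 0 = x ∧ γ 1 = y

/-- The interpolating intermediate-time Kantorovich potential
`φ_t(x) = -inf_y (d(x,y)²/(2t) - φ(y))` for `t ≠ 0`, and `φ_0 = φ`. -/
noncomputable def interpPotential {X : Type*} [MetricSpace X] (φ : X → ℝ) (t : ℝ) (x : X) : ℝ :=
  if t = 0 then φ x
  else -sInf {v : ℝ | ∃ y : X, v = dist x y ^ 2 / (2 * t) - φ y}

/-- The time-reversed interpolating Kantorovich potential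
`φ̄_t(x) = inf_y (d(x,y)²/(2(1-t)) - φ^c(y))` for `t ≠ 1`, and `φ̄_1 = -φ^c`. -/
noncomputable def reversePotential {X : Type*} [MetricSpace X] (φc : X → ℝ) (t : ℝ) (x : X) : ℝ :=
  if t = 1 then -φc x
  else sInf {v : ℝ | ∃ y : X, v = dist x y ^ 2 / (2 * (1 - t)) - φc y}

private lemma interp_on_geo {X : Type*} [MetricSpace X] {φ φc : X → ℝ}
    (hpair : IsKantorovichPair φ φc) {γ : ℝ → X}
    (hγ : IsKantorovichGeodesic φ φc γ) {r : ℝ} (hr0 : 0 < r) (hr1 : r ≤ 1) :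
    interpPotential φ r (γ r) = φ (γ 0) - r * dist (γ 0) (γ 1) ^ 2 / 2 := by
  set ℓ := dist (γ 0) (γ 1) with hℓ
  have hℓ0 : 0 ≤ ℓ := dist_nonneg
  have hmem0 : (0:ℝ) ∈ Set.Icc (0:ℝ) 1 := ⟨le_refl _, zero_le_one⟩
  have hmem1 : (1:ℝ) ∈ Set.Icc (0:ℝ) 1 := ⟨zero_le_one, le_refl _⟩
  have hmemr : r ∈ Set.Icc (0:ℝ) 1 := ⟨hr0.le, hr1⟩
  have hdr0 : dist (γ r) (γ 0) = r * ℓ := by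
    rw [hγ.1 r hmemr 0 hmem0, show |r - 0| = r by rw [sub_zero, abs_of_nonneg hr0.le]]
  have hdr1 : dist (γ r) (γ 1) = (1 - r) * ℓ := by
    rw [hγ.1 r hmemr 1 hmem1, show |r - 1| = 1 - r by
      rw [abs_of_nonpos (by linarith)]; ring]
  have hsum := hγ.2
  have hleast : IsLeast {v : ℝ | ∃ y : X, v = dist (γ r) y ^ 2 / (2 * r) - φ y}
      (r * ℓ ^ 2 / 2 - φ (γ 0)) := by
    constructor
    · exact ⟨γ 0, by rw [hdr0]; field_simp⟩
    · rintro w ⟨y, rfl⟩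
      have hφy : φ y ≤ dist y (γ 1) ^ 2 / 2 - φc (γ 1) := (hpair.2 y).1 ⟨γ 1, rfl⟩
      have htri : dist y (γ 1) ≤ dist (γ r) y + (1 - r) * ℓ := by
        calc dist y (γ 1) ≤ dist y (γ r) + dist (γ r) (γ 1) := dist_triangle _ _ _
          _ = dist (γ r) y + (1 - r) * ℓ := by rw [dist_comm y, hdr1]
      have hsq : dist y (γ 1) ^ 2 ≤ (dist (γ r) y + (1 - r) * ℓ) ^ 2 :=
        pow_le_pow_left₀ dist_nonneg htri 2
      set d := dist (γ r) y with hd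
      have hd0 : 0 ≤ d := dist_nonneg
      have h2r : (0:ℝ) < 2 * r := by linarith
      have key : (r * ℓ ^ 2 / 2 - φ (γ 0) + φ y) * (2 * r) ≤ d ^ 2 := by
        nlinarith [mul_nonneg (sub_nonneg.mpr hr1) (sq_nonneg (d - r * ℓ)),
          mul_le_mul_of_nonneg_right hφy h2r.le,
          mul_le_mul_of_nonneg_right hsq hr0.le]
      have := (le_div_iff₀ h2r).mpr key
      linarith
  have hInf : sInf {v : ℝ | ∃ y : X, v = dist (γ r) y ^ 2 / (2 * r) - φ y}
      = r * ℓ ^ 2 / 2 - φ (γ 0) := hleast.csInf_eq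
  rw [interpPotential, if_neg hr0.ne', hInf]
  ring

private lemma core_main (t₁ t₂ s a b u v : ℝ) (ht₁ : 0 < t₁) (ht₁₂ : t₁ < t₂) (ht₂ : t₂ < 1)
    (hs0 : 0 < s) (hs1 : s < 1) (ha : 0 ≤ a) (hb : 0 ≤ b)
    (h1 : 2 * (v - u) ≤ (t₂ * b + (1 - t₁) * a) ^ 2 - a ^ 2)
    (h2 : -(2 * (v - u)) ≤ (t₁ * a + (1 - t₂) * b) ^ 2 - b ^ 2) :
    v - s * b ^ 2 / 2 - (u - s * a ^ 2 / 2) ≥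
      2 * min (s / t₂) ((1 - s) / (1 - t₁)) * (v - t₂ * b ^ 2 / 2 - (u - t₁ * a ^ 2 / 2)) := by
  have ht₂0 : 0 < t₂ := ht₁.trans ht₁₂
  have h1t₁ : 0 < 1 - t₁ := by linarith
  have h1t₂ : 0 < 1 - t₂ := by linarith
  have hprod : 0 ≤ (t₂ * b - t₁ * a) * ((1 - t₁) * a - (1 - t₂) * b) := by nlinarith [h1, h2]
  have hK1 : t₁ * a ≤ t₂ * b := by
    by_contra hcon
    push_neg at hcon
    have hY : (1 - t₁) * a - (1 - t₂) * b ≤ 0 := by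
      by_contra hY
      push_neg at hY
      nlinarith [mul_pos (show 0 < t₁ * a - t₂ * b by linarith) hY]
    nlinarith [mul_le_mul_of_nonneg_left (show (1 - t₁) * a ≤ (1 - t₂) * b by linarith) ht₂0.le,
      mul_lt_mul_of_pos_left hcon h1t₂,
      mul_nonneg (show (0:ℝ) ≤ t₂ - t₁ by linarith) ha]
  have hK2 : (1 - t₂) * b ≤ (1 - t₁) * a := by
    by_contra hcon
    push_neg at hcon
    have hX : t₂ * b - t₁ * a ≤ 0 := by
      by_contra hX
      push_neg at hX
      nlinarith [mul_pos hX (show 0 < (1 - t₂) * b - (1 - t₁) * a by linarith)]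
    nlinarith [mul_le_mul_of_nonneg_left (show t₂ * b ≤ t₁ * a by linarith) h1t₁.le,
      mul_lt_mul_of_pos_left hcon ht₁,
      mul_nonneg (show (0:ℝ) ≤ t₂ - t₁ by linarith) hb]
  have hc0 : 0 ≤ t₁ * a + (1 - t₂) * b :=
    add_nonneg (mul_nonneg ht₁.le ha) (mul_nonneg h1t₂.le hb)
  have hF0 : 0 ≤ v - u := by
    nlinarith [h2, mul_nonneg (show 0 ≤ b - (t₁ * a + (1 - t₂) * b) by linarith)
      (show 0 ≤ b + (t₁ * a + (1 - t₂) * b) by linarith)]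
  have hF1 : b ^ 2 - a ^ 2 ≤ 2 * (v - u) := by
    nlinarith [h2, mul_nonneg (show 0 ≤ a - (t₁ * a + (1 - t₂) * b) by linarith)
      (show 0 ≤ a + (t₁ * a + (1 - t₂) * b) by linarith)]
  have hFσ : 0 ≤ (1 + t₂ - t₁) * (v - u) - t₂ * (b ^ 2 - a ^ 2) / 2
      - 2 * (v - t₂ * b ^ 2 / 2 - (u - t₁ * a ^ 2 / 2)) := by
    nlinarith [mul_nonneg (show (0:ℝ) ≤ 1 + t₁ - t₂ by linarith)
        (show 0 ≤ (t₂ * b + (1 - t₁) * a) ^ 2 - a ^ 2 - 2 * (v - u) by linarith),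
      mul_nonneg ht₂0.le (sq_nonneg ((1 - t₁) * a - (1 - t₂) * b)),
      mul_nonneg h1t₁.le (sq_nonneg (t₂ * b - t₁ * a))]
  rcases le_total (s / t₂) ((1 - s) / (1 - t₁)) with hm | hm
  · rw [min_eq_left hm]
    have hst : s * (1 + t₂ - t₁) ≤ t₂ := by
      rw [div_le_div_iff₀ ht₂0 h1t₁] at hm
      linarith
    rw [ge_iff_le, show 2 * (s / t₂) * (v - t₂ * b ^ 2 / 2 - (u - t₁ * a ^ 2 / 2))
        = 2 * s * (v - t₂ * b ^ 2 / 2 - (u - t₁ * a ^ 2 / 2)) / t₂ from by ring,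
      div_le_iff₀ ht₂0]
    linarith [mul_nonneg hs0.le hFσ, mul_nonneg (sub_nonneg.mpr hst) hF0]
  · rw [min_eq_right hm]
    have hst : t₂ ≤ s * (1 + t₂ - t₁) := by
      rw [div_le_div_iff₀ h1t₁ ht₂0] at hm
      linarith
    rw [ge_iff_le, show 2 * ((1 - s) / (1 - t₁)) * (v - t₂ * b ^ 2 / 2 - (u - t₁ * a ^ 2 / 2))
        = 2 * (1 - s) * (v - t₂ * b ^ 2 / 2 - (u - t₁ * a ^ 2 / 2)) / (1 - t₁) from by ring,
      div_le_iff₀ h1t₁]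
    linarith [mul_nonneg (show (0:ℝ) ≤ 1 - s by linarith) hFσ,
      mul_nonneg (sub_nonneg.mpr hst) (show 0 ≤ (v - u) - (b ^ 2 - a ^ 2) / 2 by linarith)]

private lemma core_Dnonneg (t₁ t₂ a b u v : ℝ) (ht₁ : 0 < t₁) (ht₁₂ : t₁ < t₂) (ht₂ : t₂ < 1)
    (h2 : -(2 * (v - u)) ≤ (t₁ * a + (1 - t₂) * b) ^ 2 - b ^ 2) :
    0 ≤ v - t₂ * b ^ 2 / 2 - (u - t₁ * a ^ 2 / 2) := by
  have ht₂0 : 0 < t₂ := ht₁.trans ht₁₂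
  have h1t₂ : 0 < 1 - t₂ := by linarith
  have hQ : 0 ≤ t₁ * (1 - t₁) * a ^ 2 - 2 * (t₁ * (1 - t₂)) * (a * b) + t₂ * (1 - t₂) * b ^ 2 := by
    nlinarith [sq_nonneg (t₂ * (1 - t₂) * b - t₁ * (1 - t₂) * a),
      mul_nonneg (mul_nonneg (mul_nonneg ht₁.le h1t₂.le) (show (0:ℝ) ≤ t₂ - t₁ by linarith))
        (sq_nonneg a), mul_pos ht₂0 h1t₂]
  nlinarith [h2, hQ]

private lemma core_Dpos (t₁ t₂ a b u v : ℝ) (ht₁ : 0 < t₁) (ht₁₂ : t₁ < t₂) (ht₂ : t₂ < 1)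
    (ha : 0 < a)
    (h2 : -(2 * (v - u)) ≤ (t₁ * a + (1 - t₂) * b) ^ 2 - b ^ 2) :
    0 < v - t₂ * b ^ 2 / 2 - (u - t₁ * a ^ 2 / 2) := by
  have ht₂0 : 0 < t₂ := ht₁.trans ht₁₂
  have h1t₂ : 0 < 1 - t₂ := by linarith
  have hQ : 0 < t₁ * (1 - t₁) * a ^ 2 - 2 * (t₁ * (1 - t₂)) * (a * b) + t₂ * (1 - t₂) * b ^ 2 := by
    nlinarith [sq_nonneg (t₂ * (1 - t₂) * b - t₁ * (1 - t₂) * a),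
      mul_pos (mul_pos (mul_pos ht₁ h1t₂) (show (0:ℝ) < t₂ - t₁ by linarith)) (pow_pos ha 2),
      mul_pos ht₂0 h1t₂]
  nlinarith [h2, hQ]


set_option maxHeartbeats 1600000 in
/-- On a proper geodesic space, if `γ¹_{t₁} = γ²_{t₂} = x` for `φ`-Kantorovich geodesics
and `0 < t₁ < t₂ < 1`, then for every `s ∈ (0,1)`:
`φ_s(γ²_s) - φ_s(γ¹_s) ≥ 2·min(s/t₂, (1-s)/(1-t₁))·(φ_{t₂}(x) - φ_{t₁}(x)) ≥ 0`,
and the left-hand side is strictly positive iff `φ(x) + φ^c(x) ≠ 0`. -/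
theorem statement7 {X : Type*} [MetricSpace X] [ProperSpace X]
    (hgeo : IsGeodesicSpace X) (φ φc : X → ℝ) (hpair : IsKantorovichPair φ φc)
    (γ₁ γ₂ : ℝ → X) (h₁ : IsKantorovichGeodesic φ φc γ₁)
    (h₂ : IsKantorovichGeodesic φ φc γ₂)
    (t₁ t₂ : ℝ) (ht₁ : 0 < t₁) (ht₁₂ : t₁ < t₂) (ht₂ : t₂ < 1)
    (x : X) (hx₁ : γ₁ t₁ = x) (hx₂ : γ₂ t₂ = x)
    (s : ℝ) (hs : s ∈ Set.Ioo (0:ℝ) 1) :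
    interpPotential φ s (γ₂ s) - interpPotential φ s (γ₁ s)
        ≥ 2 * min (s / t₂) ((1 - s) / (1 - t₁)) *
            (interpPotential φ t₂ x - interpPotential φ t₁ x) ∧
      0 ≤ 2 * min (s / t₂) ((1 - s) / (1 - t₁)) *
            (interpPotential φ t₂ x - interpPotential φ t₁ x) ∧
      (0 < interpPotential φ s (γ₂ s) - interpPotential φ s (γ₁ s) ↔
        φ x + φc x ≠ 0) := by
  obtain ⟨hs0, hs1⟩ := hs
  have ht₂0 : 0 < t₂ := ht₁.trans ht₁₂
  have ht₁1 : t₁ < 1 := ht₁₂.trans ht₂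
  have h1t₁ : 0 < 1 - t₁ := by linarith
  have h1t₂ : 0 < 1 - t₂ := by linarith
  set a := dist (γ₁ 0) (γ₁ 1) with hadef
  set b := dist (γ₂ 0) (γ₂ 1) with hbdef
  have ha : 0 ≤ a := dist_nonneg
  have hb : 0 ≤ b := dist_nonneg
  have hmem0 : (0:ℝ) ∈ Set.Icc (0:ℝ) 1 := ⟨le_refl _, zero_le_one⟩
  have hmem1 : (1:ℝ) ∈ Set.Icc (0:ℝ) 1 := ⟨zero_le_one, le_refl _⟩
  have hmemt₁ : t₁ ∈ Set.Icc (0:ℝ) 1 := ⟨ht₁.le, ht₁1.le⟩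
  have hmemt₂ : t₂ ∈ Set.Icc (0:ℝ) 1 := ⟨ht₂0.le, ht₂.le⟩
  -- distances from x to the endpoints
  have hx10 : dist (γ₁ 0) x = t₁ * a := by
    rw [← hx₁, h₁.1 0 hmem0 t₁ hmemt₁, show |0 - t₁| = t₁ by
      rw [zero_sub, abs_neg, abs_of_nonneg ht₁.le]]
  have hx11 : dist x (γ₁ 1) = (1 - t₁) * a := by
    rw [← hx₁, h₁.1 t₁ hmemt₁ 1 hmem1, show |t₁ - 1| = 1 - t₁ by
      rw [abs_of_nonpos (by linarith)]; ring]
  have hx20 : dist (γ₂ 0) x = t₂ * b := by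
    rw [← hx₂, h₂.1 0 hmem0 t₂ hmemt₂, show |0 - t₂| = t₂ by
      rw [zero_sub, abs_neg, abs_of_nonneg ht₂0.le]]
  have hx21 : dist x (γ₂ 1) = (1 - t₂) * b := by
    rw [← hx₂, h₂.1 t₂ hmemt₂ 1 hmem1, show |t₂ - 1| = 1 - t₂ by
      rw [abs_of_nonpos (by linarith)]; ring]
  have hγ₁sum : φ (γ₁ 0) + φc (γ₁ 1) = a ^ 2 / 2 := h₁.2
  have hγ₂sum : φ (γ₂ 0) + φc (γ₂ 1) = b ^ 2 / 2 := h₂.2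
  -- the two cross inequalities
  have hh1 : 2 * (φ (γ₂ 0) - φ (γ₁ 0)) ≤ (t₂ * b + (1 - t₁) * a) ^ 2 - a ^ 2 := by
    have hA1 : φc (γ₁ 1) ≤ dist (γ₁ 1) (γ₂ 0) ^ 2 / 2 - φ (γ₂ 0) :=
      (hpair.1 (γ₁ 1)).1 ⟨γ₂ 0, rfl⟩
    have htri : dist (γ₁ 1) (γ₂ 0) ≤ (1 - t₁) * a + t₂ * b := by
      calc dist (γ₁ 1) (γ₂ 0) ≤ dist (γ₁ 1) x + dist x (γ₂ 0) := dist_triangle _ _ _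
        _ = (1 - t₁) * a + t₂ * b := by rw [dist_comm (γ₁ 1) x, dist_comm x (γ₂ 0), hx11, hx20]
    have hsq : dist (γ₁ 1) (γ₂ 0) ^ 2 ≤ ((1 - t₁) * a + t₂ * b) ^ 2 :=
      pow_le_pow_left₀ dist_nonneg htri 2
    nlinarith [hA1, hsq, hγ₁sum]
  have hh2 : -(2 * (φ (γ₂ 0) - φ (γ₁ 0))) ≤ (t₁ * a + (1 - t₂) * b) ^ 2 - b ^ 2 := by
    have hA2 : φc (γ₂ 1) ≤ dist (γ₂ 1) (γ₁ 0) ^ 2 / 2 - φ (γ₁ 0) :=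
      (hpair.1 (γ₂ 1)).1 ⟨γ₁ 0, rfl⟩
    have htri : dist (γ₂ 1) (γ₁ 0) ≤ (1 - t₂) * b + t₁ * a := by
      calc dist (γ₂ 1) (γ₁ 0) ≤ dist (γ₂ 1) x + dist x (γ₁ 0) := dist_triangle _ _ _
        _ = (1 - t₂) * b + t₁ * a := by rw [dist_comm (γ₂ 1) x, dist_comm x (γ₁ 0), hx21, hx10]
    have hsq : dist (γ₂ 1) (γ₁ 0) ^ 2 ≤ ((1 - t₂) * b + t₁ * a) ^ 2 :=
      pow_le_pow_left₀ dist_nonneg htri 2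
    nlinarith [hA2, hsq, hγ₂sum]
  -- interpolation values
  have hI1 : interpPotential φ s (γ₁ s) = φ (γ₁ 0) - s * a ^ 2 / 2 :=
    interp_on_geo hpair h₁ hs0 hs1.le
  have hI2 : interpPotential φ s (γ₂ s) = φ (γ₂ 0) - s * b ^ 2 / 2 :=
    interp_on_geo hpair h₂ hs0 hs1.le
  have hIt1 : interpPotential φ t₁ x = φ (γ₁ 0) - t₁ * a ^ 2 / 2 := by
    have := interp_on_geo hpair h₁ ht₁ ht₁1.le
    rwa [hx₁] at this
  have hIt2 : interpPotential φ t₂ x = φ (γ₂ 0) - t₂ * b ^ 2 / 2 := by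
    have := interp_on_geo hpair h₂ ht₂0 ht₂.le
    rwa [hx₂] at this
  rw [hI1, hI2, hIt1, hIt2]
  have part1 := core_main t₁ t₂ s a b (φ (γ₁ 0)) (φ (γ₂ 0)) ht₁ ht₁₂ ht₂ hs0 hs1 ha hb hh1 hh2
  have hD0 := core_Dnonneg t₁ t₂ a b (φ (γ₁ 0)) (φ (γ₂ 0)) ht₁ ht₁₂ ht₂ hh2
  have hmin0 : 0 ≤ min (s / t₂) ((1 - s) / (1 - t₁)) :=
    le_min (div_nonneg hs0.le ht₂0.le) (div_nonneg (by linarith) (by linarith))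
  refine ⟨part1, mul_nonneg (mul_nonneg (by norm_num) hmin0) hD0, ?_⟩
  constructor
  · -- 0 < diff → φ x + φc x ≠ 0
    intro hpos hzero
    have hw1 : φ x + φc x ≤ -(t₁ * (1 - t₁)) * a ^ 2 := by
      have hc1 : φc x ≤ dist x (γ₁ 0) ^ 2 / 2 - φ (γ₁ 0) := (hpair.1 x).1 ⟨γ₁ 0, rfl⟩
      have hc2 : φ x ≤ dist x (γ₁ 1) ^ 2 / 2 - φc (γ₁ 1) := (hpair.2 x).1 ⟨γ₁ 1, rfl⟩
      rw [dist_comm x (γ₁ 0), hx10] at hc1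
      rw [hx11] at hc2
      nlinarith [hc1, hc2, hγ₁sum, sq_nonneg a]
    have hw2 : φ x + φc x ≤ -(t₂ * (1 - t₂)) * b ^ 2 := by
      have hc1 : φc x ≤ dist x (γ₂ 0) ^ 2 / 2 - φ (γ₂ 0) := (hpair.1 x).1 ⟨γ₂ 0, rfl⟩
      have hc2 : φ x ≤ dist x (γ₂ 1) ^ 2 / 2 - φc (γ₂ 1) := (hpair.2 x).1 ⟨γ₂ 1, rfl⟩
      rw [dist_comm x (γ₂ 0), hx20] at hc1
      rw [hx21] at hc2
      nlinarith [hc1, hc2, hγ₂sum, sq_nonneg b]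
    have ha0 : a = 0 := by
      have h2 : a ^ 2 ≤ 0 := by nlinarith [hw1, mul_pos ht₁ h1t₁]
      nlinarith [sq_nonneg a]
    have hb0 : b = 0 := by
      have h2 : b ^ 2 ≤ 0 := by nlinarith [hw2, mul_pos ht₂0 h1t₂]
      nlinarith [sq_nonneg b]
    have hu : γ₁ 0 = x := dist_eq_zero.mp (by rw [hx10, ha0, mul_zero])
    have hv : γ₂ 0 = x := dist_eq_zero.mp (by rw [hx20, hb0, mul_zero])
    rw [hu, hv, ha0, hb0] at hpos
    norm_num at hpos
  · -- φ x + φc x ≠ 0 → 0 < diff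
    intro hne
    have hapos : 0 < a := by
      rcases ha.lt_or_eq with h | h
      · exact h
      · exfalso
        have ha0 : a = 0 := h.symm
        have hu : γ₁ 0 = x := dist_eq_zero.mp (by rw [hx10, ha0, mul_zero])
        have hq : x = γ₁ 1 := dist_eq_zero.mp (by rw [hx11, ha0, mul_zero])
        apply hne
        have e1 : φ (γ₁ 0) = φ x := congrArg φ hu
        have e2 : φc (γ₁ 1) = φc x := congrArg φc hq.symm
        have := hγ₁sum
        rw [e1, e2, ha0] at this
        norm_num at this
        linarith
    have hDp := core_Dpos t₁ t₂ a b (φ (γ₁ 0)) (φ (γ₂ 0)) ht₁ ht₁₂ ht₂ hapos hh2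
    have hminp : 0 < min (s / t₂) ((1 - s) / (1 - t₁)) :=
      lt_min (div_pos hs0 ht₂0) (div_pos (by linarith) h1t₁)
    have hpos2 : 0 < 2 * min (s / t₂) ((1 - s) / (1 - t₁)) *
        (φ (γ₂ 0) - t₂ * b ^ 2 / 2 - (φ (γ₁ 0) - t₁ * a ^ 2 / 2)) :=
      mul_pos (mul_pos two_pos hminp) hDp
    linarith [part1]
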